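/- Fix integers L1 ≥ 0, m ≥ 1, and t_1,…,t_m ≥ 1, and let T be the tree with vertex set consisting of a center c, leaves ℓ_1,…,ℓ_{L1} each adjacent only to c, vertices v_1,…,v_m each adjacent to c, and for each 1 ≤ i ≤ m, leaves w_{i,1},…,w_{i,t_i} each adjacent only to v_i, with no other edges. Set L2 = t_1 + ⋯ + t_m. Then the independence polynomial of T satisfies P_T(x) = (1+x)^{L1} · ∏_{i=1}^{m} ( x + (1+x)^{t_i} ) + x(1+x)^{L2}. -/
import Mathlib


attribute [local instance] Classical.propDecidable

/-- `s` is an independent set of vertices of `G`. -/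
def IsIndep {V : Type*} (G : SimpleGraph V) (s : Finset V) : Prop :=
  ∀ v ∈ s, ∀ w ∈ s, ¬ G.Adj v w

/-- The independence polynomial `P_G(x) = ∑ g_i x^i`. -/
noncomputable def indepPoly {V : Type*} [Fintype V] (G : SimpleGraph V) : Polynomial ℤ :=
  ∑ s ∈ Finset.univ.filter (fun s : Finset V => IsIndep G s), Polynomial.X ^ s.card

/-- Vertices of the radius-2 tree: the center `c`, the leaves `ℓ_1,…,ℓ_{L1}` adjacent to `c`,
the branch vertices `v_1,…,v_m` adjacent to `c`, and for each `i` the leaves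
`w_{i,1},…,w_{i,t_i}` adjacent to `v_i`. -/
abbrev TVert (L1 m : ℕ) (t : Fin m → ℕ) : Type :=
  Unit ⊕ Fin L1 ⊕ Fin m ⊕ (Σ i : Fin m, Fin (t i))

/-- The defining relation of the radius-2 tree: `c` is joined to each `ℓ_j` and each `v_i`,
and `v_i` is joined to each `w_{i,k}`; there are no other edges. -/
def TRel (L1 m : ℕ) (t : Fin m → ℕ) : TVert L1 m t → TVert L1 m t → Prop
  | Sum.inl _, Sum.inr (Sum.inl _) => True
  | Sum.inl _, Sum.inr (Sum.inr (Sum.inl _)) => True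
  | Sum.inr (Sum.inr (Sum.inl i)), Sum.inr (Sum.inr (Sum.inr ⟨j, _⟩)) => i = j
  | _, _ => False

/-- The radius-2 tree with parameters `L1`, `m`, `t`. -/
noncomputable def radTree (L1 m : ℕ) (t : Fin m → ℕ) : SimpleGraph (TVert L1 m t) :=
  SimpleGraph.fromRel (TRel L1 m t)

open Finset Polynomial Sum

lemma sum_pow_card {α : Type*} [Fintype α] :
    ∑ s : Finset α, (X : Polynomial ℤ) ^ s.card = (1 + X) ^ Fintype.card α := by
  have h := Fintype.prod_add (fun _ : α => (X : Polynomial ℤ)) (fun _ => 1)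
  simp only [prod_const, one_pow, mul_one, Finset.card_univ] at h
  rw [add_comm, ← h]

section Aux

variable {L1 m : ℕ} {t : Fin m → ℕ}

/-- Parametrization of the independent sets. -/
abbrev DTy (L1 m : ℕ) (t : Fin m → ℕ) : Type :=
  (Finset (Fin L1) × ((i : Fin m) → Unit ⊕ Finset (Fin (t i)))) ⊕ Finset ((i : Fin m) × Fin (t i))

def gset {i : Fin m} : Unit ⊕ Finset (Fin (t i)) → Finset (Fin (t i))
  | .inl _ => ∅
  | .inr b => b

noncomputable def Phi : DTy L1 m t → Finset (TVert L1 m t)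
  | .inl (a, g) =>
      (∅ : Finset Unit).disjSum (a.disjSum
        ((univ.filter fun i => (g i).isLeft).disjSum (univ.sigma fun i => gset (g i))))
  | .inr b =>
      ({()} : Finset Unit).disjSum ((∅ : Finset (Fin L1)).disjSum
        ((∅ : Finset (Fin m)).disjSum b))

variable {a : Finset (Fin L1)} {g : (i : Fin m) → Unit ⊕ Finset (Fin (t i))}
  {b : Finset ((i : Fin m) × Fin (t i))}

@[simp] lemma c_mem_Phi_inl {u : Unit} :
    (Sum.inl u : TVert L1 m t) ∈ Phi (.inl (a, g)) ↔ False := by simp [Phi]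

@[simp] lemma l_mem_Phi_inl {j : Fin L1} :
    (Sum.inr (Sum.inl j) : TVert L1 m t) ∈ Phi (.inl (a, g)) ↔ j ∈ a := by simp [Phi]

@[simp] lemma v_mem_Phi_inl {i : Fin m} :
    (Sum.inr (Sum.inr (Sum.inl i)) : TVert L1 m t) ∈ Phi (.inl (a, g)) ↔ (g i).isLeft := by
  simp [Phi]

@[simp] lemma w_mem_Phi_inl {p : (i : Fin m) × Fin (t i)} :
    (Sum.inr (Sum.inr (Sum.inr p)) : TVert L1 m t) ∈ Phi (.inl (a, g)) ↔ p.2 ∈ gset (g p.1) := by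
  simp [Phi, Finset.mem_sigma]

@[simp] lemma c_mem_Phi_inr {u : Unit} :
    (Sum.inl u : TVert L1 m t) ∈ Phi (.inr b) ↔ True := by simp [Phi]

@[simp] lemma l_mem_Phi_inr {j : Fin L1} :
    (Sum.inr (Sum.inl j) : TVert L1 m t) ∈ Phi (.inr b) ↔ False := by simp [Phi]

@[simp] lemma v_mem_Phi_inr {i : Fin m} :
    (Sum.inr (Sum.inr (Sum.inl i)) : TVert L1 m t) ∈ Phi (.inr b) ↔ False := by simp [Phi]

@[simp] lemma w_mem_Phi_inr {p : (i : Fin m) × Fin (t i)} :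
    (Sum.inr (Sum.inr (Sum.inr p)) : TVert L1 m t) ∈ Phi (.inr b) ↔ p ∈ b := by
  simp only [Phi, inr_mem_disjSum]

def wei {i : Fin m} : Unit ⊕ Finset (Fin (t i)) → ℕ
  | .inl _ => 1
  | .inr b => b.card

def expo : DTy L1 m t → ℕ
  | .inl (a, g) => a.card + ∑ i, wei (g i)
  | .inr b => 1 + b.card

lemma card_Phi (d : DTy L1 m t) : (Phi d).card = expo d := by
  rcases d with ⟨a, g⟩ | b
  · simp only [Phi, expo, card_disjSum, card_empty, Finset.card_sigma, zero_add]
    congr 1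
    rw [Finset.card_filter, ← Finset.sum_add_distrib]
    refine Finset.sum_congr rfl fun i _ => ?_
    cases h : g i <;> simp [h, gset, wei]
  · simp [Phi, expo]

lemma no_rel_Phi (d : DTy L1 m t) :
    ∀ v ∈ Phi d, ∀ w ∈ Phi d, ¬ TRel L1 m t v w := by
  rcases d with ⟨a, g⟩ | b
  · rintro (u | j | i | ⟨i, k⟩) hv (u' | j' | i' | ⟨i', k'⟩) hw hr <;>
      simp only [TRel] at hr <;> try exact hr
    · simp at hv
    · simp at hv
    · simp only [v_mem_Phi_inl] at hv
      simp only [w_mem_Phi_inl] at hw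
      subst hr
      cases h : g i <;> rw [h] at hv hw <;> simp [gset] at hv hw
  · rintro (u | j | i | ⟨i, k⟩) hv (u' | j' | i' | ⟨i', k'⟩) hw hr <;>
      simp only [TRel] at hr <;> try exact hr
    · simp at hw
    · simp at hw
    · simp at hv

lemma isIndep_Phi (d : DTy L1 m t) : IsIndep (radTree L1 m t) (Phi d) := by
  intro v hv w hw hadj
  rw [radTree, SimpleGraph.fromRel_adj] at hadj
  obtain ⟨-, h | h⟩ := hadj
  · exact no_rel_Phi d v hv w hw h
  · exact no_rel_Phi d w hw v hv h

lemma Phi_injective : Function.Injective (Phi : DTy L1 m t → _) := by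
  rintro (⟨a₁, g₁⟩ | b₁) (⟨a₂, g₂⟩ | b₂) h
  · have ha : a₁ = a₂ := by
      ext j
      rw [← l_mem_Phi_inl (g := g₁), h, l_mem_Phi_inl]
    have hg : g₁ = g₂ := by
      funext i
      have h1 : (g₁ i).isLeft = (g₂ i).isLeft := by
        have := Finset.ext_iff.1 h (Sum.inr (Sum.inr (Sum.inl i)))
        simpa using this
      have h2 : gset (g₁ i) = gset (g₂ i) := by
        ext k
        have := Finset.ext_iff.1 h (Sum.inr (Sum.inr (Sum.inr ⟨i, k⟩)))
        simpa using this
      cases hc1 : g₁ i <;> cases hc2 : g₂ i <;> rw [hc1, hc2] at h1 h2 <;>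
        simp_all [gset]
    rw [ha, hg]
  · exact absurd (Finset.ext_iff.1 h (Sum.inl ())) (by simp)
  · exact absurd (Finset.ext_iff.1 h (Sum.inl ())) (by simp)
  · have : b₁ = b₂ := by
      ext p
      have := Finset.ext_iff.1 h (Sum.inr (Sum.inr (Sum.inr p)))
      simpa using this
    rw [this]

lemma Phi_surjective {s : Finset (TVert L1 m t)} (hs : IsIndep (radTree L1 m t) s) :
    ∃ d, Phi d = s := by
  have hadj : ∀ v w : TVert L1 m t, v ≠ w → TRel L1 m t v w → v ∈ s → w ∈ s → False := by
    intro v w hne hr hv hw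
    exact hs v hv w hw (by rw [radTree, SimpleGraph.fromRel_adj]; exact ⟨hne, Or.inl hr⟩)
  by_cases hc : (Sum.inl () : TVert L1 m t) ∈ s
  · refine ⟨.inr (univ.filter fun p => Sum.inr (Sum.inr (Sum.inr p)) ∈ s), ?_⟩
    ext x
    rcases x with u | j | i | p
    · cases u; simpa using hc
    · simp only [l_mem_Phi_inr, false_iff]
      intro hj
      exact hadj _ _ (by simp) (by trivial) hc hj
    · simp only [v_mem_Phi_inr, false_iff]
      intro hi
      exact hadj _ _ (by simp) (by trivial) hc hi
    · simp
  · refine ⟨.inl (univ.filter fun j => Sum.inr (Sum.inl j) ∈ s,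
      fun i => if Sum.inr (Sum.inr (Sum.inl i)) ∈ s then Sum.inl ()
        else Sum.inr (univ.filter fun k => Sum.inr (Sum.inr (Sum.inr ⟨i, k⟩)) ∈ s)), ?_⟩
    ext x
    rcases x with u | j | i | ⟨i, k⟩
    · cases u; simpa using fun h => hc h
    · simp
    · simp only [v_mem_Phi_inl]
      by_cases hi : Sum.inr (Sum.inr (Sum.inl i)) ∈ s <;> simp [hi]
    · simp only [w_mem_Phi_inl]
      by_cases hi : Sum.inr (Sum.inr (Sum.inl i)) ∈ s
      · simp only [hi, if_true, gset, Finset.notMem_empty, false_iff]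
        intro hk
        exact hadj _ _ (by simp) (by simp [TRel]) hi hk
      · simp [hi, gset]

end Aux

/-- The independence polynomial of the radius-2 tree:
`P_T(x) = (1+x)^{L1} ∏_{i=1}^{m} (x + (1+x)^{t_i}) + x (1+x)^{L2}` where `L2 = ∑ t_i`. -/
theorem indepPoly_radTree (L1 m : ℕ) (hm : 1 ≤ m) (t : Fin m → ℕ) (ht : ∀ i, 1 ≤ t i) :
    indepPoly (radTree L1 m t)
      = (1 + Polynomial.X) ^ L1
          * ∏ i : Fin m, (Polynomial.X + (1 + Polynomial.X) ^ (t i))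
        + Polynomial.X * (1 + Polynomial.X) ^ (∑ i : Fin m, t i) := by
  have key : indepPoly (radTree L1 m t) = ∑ d : DTy L1 m t, (X : Polynomial ℤ) ^ expo d := by
    rw [indepPoly]
    refine (Finset.sum_bij (fun d _ => Phi d) ?_ ?_ ?_ ?_).symm
    · intro d _; simp [isIndep_Phi d]
    · intro d₁ _ d₂ _ h; exact Phi_injective h
    · intro s hs
      simp only [mem_filter, mem_univ, true_and] at hs
      obtain ⟨d, hd⟩ := Phi_surjective hs
      exact ⟨d, mem_univ d, hd⟩
    · intro d _; rw [card_Phi]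
  rw [key, Fintype.sum_sum_type]
  congr 1
  · rw [Fintype.sum_prod_type]
    have he : ∀ (a : Finset (Fin L1)) (g : (i : Fin m) → Unit ⊕ Finset (Fin (t i))),
        (X : Polynomial ℤ) ^ expo (Sum.inl (a, g) : DTy L1 m t)
          = X ^ a.card * ∏ i, X ^ wei (g i) := by
      intro a g
      rw [expo, pow_add, Finset.prod_pow_eq_pow_sum]
    simp only [he]
    rw [← Finset.sum_mul_sum]
    congr 1
    · exact sum_pow_card.trans (by rw [Fintype.card_fin])
    · rw [← Fintype.prod_sum (fun (i : Fin m) (z : Unit ⊕ Finset (Fin (t i))) => (X : Polynomial ℤ) ^ wei z)]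
      refine Finset.prod_congr rfl fun i _ => ?_
      rw [Fintype.sum_sum_type]
      congr 1
      · simp [wei]
      · exact sum_pow_card.trans (by rw [Fintype.card_fin])
  · have he : ∀ b : Finset ((i : Fin m) × Fin (t i)),
        (X : Polynomial ℤ) ^ expo (Sum.inr b : DTy L1 m t) = X * X ^ b.card := by
      intro b; rw [expo, pow_add, pow_one]
    simp only [he]
    rw [← Finset.mul_sum, sum_pow_card]
    congr 2
    simp
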